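/- arXiv:1502.01613 — 2 statements merged into one kernel-verified Lean document; each statement's English description precedes it below -/
import Mathlib

section
/- Let A ∈ ℂ^{n×n}, let μ(A) denote the logarithmic norm of A, i.e. the largest eigenvalue of (A + A*)/2 (equivalently the supremum of Re⟨x, Ax⟩ over unit vectors x), and for ℓ ≥ 1 let φ_ℓ(A) = Σ_{k=0}^∞ A^k/(k+ℓ)! (equivalently φ_ℓ(A) = ∫_0^1 e^{(1−τ)A} τ^{ℓ−1}/(ℓ−1)! dτ). Then ‖φ_ℓ(A)‖ ≤ max(1, e^{μ(A)}) / ℓ!. -/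
open scoped Matrix.Norms.L2Operator

open NormedSpace MeasureTheory

section phiAux

variable {E : Type*} [NormedAddCommGroup E] [InnerProductSpace ℂ E] [CompleteSpace E]

lemma phiAux_exp_apply_norm_le (T : E →L[ℂ] E) (μ : ℝ)
    (h : ∀ x : E, (inner ℂ x (T x) : ℂ).re ≤ μ * ‖x‖ ^ 2) {t : ℝ} (ht : 0 ≤ t) (x : E) :
    ‖exp (t • T) x‖ ≤ Real.exp (t * μ) * ‖x‖ := by
  set y : ℝ → E := fun s => exp (s • T) x with hy_def
  have hy : ∀ s : ℝ, HasDerivAt y (T (y s)) s := by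
    intro s
    have h1 := hasDerivAt_exp_smul_const' T s
    have h2 : HasDerivAt (fun u : ℝ => ((ContinuousLinearMap.apply ℂ E x).restrictScalars ℝ)
        (exp (u • T))) (((ContinuousLinearMap.apply ℂ E x).restrictScalars ℝ)
        (T * exp (s • T))) s :=
      (((ContinuousLinearMap.apply ℂ E x).restrictScalars ℝ).hasFDerivAt).comp_hasDerivAt s h1
    simpa [hy_def] using h2
  have hg : ∀ s : ℝ, HasDerivAt (fun u => ‖y u‖ ^ 2)
      (2 * (inner ℂ (y s) (T (y s)) : ℂ).re) s := by
    intro s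
    have h3 := (hy s).inner ℂ (hy s)
    have h4 : HasDerivAt (fun u => Complex.reCLM (inner ℂ (y u) (y u) : ℂ))
        (Complex.reCLM ((inner ℂ (y s) (T (y s)) : ℂ) + inner ℂ (T (y s)) (y s))) s :=
      Complex.reCLM.hasFDerivAt.comp_hasDerivAt s h3
    have h5 : (fun u => Complex.reCLM (inner ℂ (y u) (y u) : ℂ)) = fun u => ‖y u‖ ^ 2 := by
      funext u
      have := inner_self_eq_norm_sq (𝕜 := ℂ) (y u)
      simpa using this
    rw [h5] at h4
    convert h4 using 1
    have h6 : (inner ℂ (T (y s)) (y s) : ℂ) = starRingEnd ℂ (inner ℂ (y s) (T (y s))) :=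
      (inner_conj_symm _ _).symm
    rw [map_add, h6]
    simp only [Complex.reCLM_apply, Complex.conj_re]
    ring
  have hh : ∀ s : ℝ, HasDerivAt (fun u => Real.exp (-2 * μ * u) * ‖y u‖ ^ 2)
      ((-2 * μ) * Real.exp (-2 * μ * s) * ‖y s‖ ^ 2
        + Real.exp (-2 * μ * s) * (2 * (inner ℂ (y s) (T (y s)) : ℂ).re)) s := by
    intro s
    have e1 : HasDerivAt (fun u : ℝ => Real.exp (-2 * μ * u))
        ((-2 * μ) * Real.exp (-2 * μ * s)) s := by
      have := ((hasDerivAt_id s).const_mul (-2 * μ)).exp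
      simpa [mul_comm] using this
    exact e1.mul (hg s)
  have hanti : Antitone (fun u => Real.exp (-2 * μ * u) * ‖y u‖ ^ 2) := by
    apply antitone_of_deriv_nonpos
    · exact fun s => (hh s).differentiableAt
    · intro s
      rw [(hh s).deriv]
      have hb := h (y s)
      have hpos := Real.exp_pos (-2 * μ * s)
      nlinarith [hpos.le, hb]
  have h0 : Real.exp (-2 * μ * t) * ‖y t‖ ^ 2 ≤ ‖x‖ ^ 2 := by
    have := hanti ht
    simpa [hy_def] using this
  have hE := Real.exp_pos (-2 * μ * t)
  have key : Real.exp (-2 * μ * t) * (Real.exp (t * μ)) ^ 2 = 1 := by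
    rw [sq, ← Real.exp_add, ← Real.exp_add]
    have : -2 * μ * t + (t * μ + t * μ) = 0 := by ring
    rw [this, Real.exp_zero]
  have h7 : ‖y t‖ ^ 2 ≤ (Real.exp (t * μ) * ‖x‖) ^ 2 := by
    have h8 := mul_le_mul_of_nonneg_left h0 (sq_nonneg (Real.exp (t * μ)))
    rw [mul_pow]
    nlinarith [h8, key]
  calc ‖y t‖ = Real.sqrt (‖y t‖ ^ 2) := (Real.sqrt_sq (norm_nonneg _)).symm
    _ ≤ Real.sqrt ((Real.exp (t * μ) * ‖x‖) ^ 2) := Real.sqrt_le_sqrt h7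
    _ = Real.exp (t * μ) * ‖x‖ := Real.sqrt_sq (by positivity)

lemma phiAux_exp_opNorm_le (T : E →L[ℂ] E) (μ : ℝ)
    (h : ∀ x : E, (inner ℂ x (T x) : ℂ).re ≤ μ * ‖x‖ ^ 2) {t : ℝ} (ht : 0 ≤ t) :
    ‖exp (t • T)‖ ≤ Real.exp (t * μ) :=
  ContinuousLinearMap.opNorm_le_bound _ (Real.exp_nonneg _) (phiAux_exp_apply_norm_le T μ h ht)

end phiAux

lemma phiAux_beta_nat (a b : ℕ) :
    ∫ s in (0:ℝ)..1, s ^ a * (1 - s) ^ b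
      = (a.factorial * b.factorial : ℝ) / (a + b + 1).factorial := by
  have h1 : Complex.betaIntegral (a + 1) (b + 1)
      = ((∫ s in (0:ℝ)..1, s ^ a * (1 - s) ^ b : ℝ) : ℂ) := by
    rw [Complex.betaIntegral, ← intervalIntegral.integral_ofReal]
    apply intervalIntegral.integral_congr
    intro x _
    simp only [add_sub_cancel_right, Complex.cpow_natCast]
    push_cast
    ring
  have h2 := Complex.Gamma_mul_Gamma_eq_betaIntegral
    (s := (a : ℂ) + 1) (t := (b : ℂ) + 1) (by simp; positivity) (by simp; positivity)
  rw [Complex.Gamma_nat_eq_factorial, Complex.Gamma_nat_eq_factorial] at h2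
  have h3 : ((a : ℂ) + 1 + ((b : ℂ) + 1)) = ((a + b + 1 : ℕ) : ℂ) + 1 := by push_cast; ring
  rw [h3, Complex.Gamma_nat_eq_factorial, h1] at h2
  have hne : ((a + b + 1).factorial : ℂ) ≠ 0 := by
    exact_mod_cast Nat.cast_ne_zero.mpr (a + b + 1).factorial_ne_zero
  apply Complex.ofReal_injective
  push_cast
  rw [eq_div_iff (by exact_mod_cast hne)]
  linear_combination -h2

lemma phiAux_phi_hasSum {𝔸 : Type*} [NormedRing 𝔸] [NormedAlgebra ℝ 𝔸] [CompleteSpace 𝔸]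
    (T : 𝔸) (m : ℕ) :
    HasSum (fun k : ℕ => (((k + (m + 1)).factorial : ℝ))⁻¹ • T ^ k)
      (∫ s in Set.Ioc (0:ℝ) 1, ((s ^ m / m.factorial : ℝ)) • exp ((1 - s) • T)) := by
  set F : ℕ → ℝ → 𝔸 := fun k s => ((s ^ m * (1 - s) ^ k) / (m.factorial * k.factorial) : ℝ) • T ^ k
    with hF
  have hInt : ∀ k, IntegrableOn (F k) (Set.Ioc (0:ℝ) 1) := by
    intro k
    apply Continuous.integrableOn_Ioc
    fun_prop
  have hcoeff : ∀ k : ℕ,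
      (∫ s in Set.Ioc (0:ℝ) 1, (s ^ m * (1 - s) ^ k) / (m.factorial * k.factorial : ℝ))
      = ((m + k + 1).factorial : ℝ)⁻¹ := by
    intro k
    rw [← intervalIntegral.integral_of_le zero_le_one, intervalIntegral.integral_div,
      phiAux_beta_nat m k]
    have h1 : (m.factorial : ℝ) ≠ 0 := Nat.cast_ne_zero.mpr m.factorial_ne_zero
    have h2 : (k.factorial : ℝ) ≠ 0 := Nat.cast_ne_zero.mpr k.factorial_ne_zero
    have h3 : ((m + k + 1).factorial : ℝ) ≠ 0 := Nat.cast_ne_zero.mpr (m + k + 1).factorial_ne_zero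
    field_simp
  have hFint : ∀ k : ℕ, (∫ s in Set.Ioc (0:ℝ) 1, F k s) = ((m + k + 1).factorial : ℝ)⁻¹ • T ^ k := by
    intro k
    rw [hF]
    simp only
    rw [integral_smul_const, hcoeff k]
  have hnormint : ∀ k : ℕ, (∫ s in Set.Ioc (0:ℝ) 1, ‖F k s‖)
      = ((m + k + 1).factorial : ℝ)⁻¹ * ‖T ^ k‖ := by
    intro k
    rw [← hcoeff k, ← integral_mul_const]
    apply setIntegral_congr_fun measurableSet_Ioc
    intro s hs
    rw [hF]
    simp only
    rw [norm_smul, Real.norm_eq_abs, abs_of_nonneg]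
    have h1 : (0:ℝ) ≤ s := hs.1.le
    have h2 : (0:ℝ) ≤ 1 - s := by linarith [hs.2]
    positivity
  have hsummable : Summable (fun k : ℕ => ∫ s in Set.Ioc (0:ℝ) 1, ‖F k s‖) := by
    set C := max 1 ‖(1 : 𝔸)‖ with hC
    refine Summable.of_nonneg_of_le (fun k => integral_nonneg (fun s => norm_nonneg _))
      (fun k => ?_) ((Real.summable_pow_div_factorial ‖T‖).mul_left C)
    ·
      rw [hnormint k]
      have hTk : ‖T ^ k‖ ≤ C * ‖T‖ ^ k := by
        rcases Nat.eq_zero_or_pos k with hk | hk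
        · subst hk
          simp only [pow_zero, mul_one, hC]
          exact le_max_right 1 ‖(1 : 𝔸)‖
        · calc ‖T ^ k‖ ≤ ‖T‖ ^ k := norm_pow_le' T hk
            _ ≤ C * ‖T‖ ^ k := by
              nlinarith [pow_nonneg (norm_nonneg T) k, le_max_left 1 ‖(1 : 𝔸)‖]
      have hfac : ((m + k + 1).factorial : ℝ)⁻¹ ≤ (k.factorial : ℝ)⁻¹ := by
        apply inv_anti₀
        · exact_mod_cast k.factorial_pos
        · exact_mod_cast Nat.factorial_le (by omega)
      calc ((m + k + 1).factorial : ℝ)⁻¹ * ‖T ^ k‖ ≤ (k.factorial : ℝ)⁻¹ * (C * ‖T‖ ^ k) := by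
            apply mul_le_mul hfac hTk (norm_nonneg _) (by positivity)
        _ = C * (‖T‖ ^ k / k.factorial) := by ring
  have hrepr : ∀ s : ℝ, ((s ^ m / m.factorial : ℝ)) • exp ((1 - s) • T) = ∑' k, F k s := by
    intro s
    rw [exp_eq_tsum (𝕂 := ℝ), ← Summable.tsum_const_smul _ (expSeries_summable' (𝕂 := ℝ) ((1 - s) • T))]
    apply tsum_congr
    intro k
    rw [hF]
    simp only
    rw [smul_pow, smul_smul, smul_smul]
    congr 1
    field_simp
  have H := MeasureTheory.hasSum_integral_of_summable_integral_norm hInt hsummable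
  have hκ : ∀ k : ℕ, k + (m + 1) = m + k + 1 := fun k => by omega
  simp only [hκ]
  have h9 : (∫ s in Set.Ioc (0:ℝ) 1, ∑' k, F k s)
      = ∫ s in Set.Ioc (0:ℝ) 1, ((s ^ m / m.factorial : ℝ)) • exp ((1 - s) • T) := by
    apply integral_congr_ae
    filter_upwards with s using (hrepr s).symm
  rw [h9] at H
  have h10 : (fun k => ∫ s in Set.Ioc (0:ℝ) 1, F k s)
      = fun k : ℕ => ((m + k + 1).factorial : ℝ)⁻¹ • T ^ k := funext hFint
  rwa [h10] at H

/-- The matrix φ-function `φ_ℓ(A) = ∑_{k=0}^∞ A^k / (k+ℓ)!`, defined by its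
norm-convergent power series. -/
noncomputable def phiM {n : ℕ} (l : ℕ) (A : Matrix (Fin n) (Fin n) ℂ) :
    Matrix (Fin n) (Fin n) ℂ :=
  ∑' k : ℕ, ((Nat.factorial (k + l) : ℂ))⁻¹ • A ^ k

set_option maxHeartbeats 1000000 in
/-- If `μ` is the logarithmic norm of `A` (the largest eigenvalue of `(A + A*)/2`, equivalently
the supremum of `Re ⟪x, A x⟫` over unit vectors `x`), then for `ℓ ≥ 1`,
`‖φ_ℓ(A)‖ ≤ max(1, e^μ) / ℓ!` in the spectral norm. -/
theorem phi_norm_bound (n : ℕ) (A : Matrix (Fin n) (Fin n) ℂ) (μ : ℝ)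
    (hμ : IsLUB {r : ℝ | ∃ x : EuclideanSpace ℂ (Fin n), ‖x‖ = 1 ∧
      r = (inner ℂ x (Matrix.toEuclideanLin A x) : ℂ).re} μ)
    (l : ℕ) (hl : 1 ≤ l) :
    ‖phiM l A‖ ≤ max 1 (Real.exp μ) / (Nat.factorial l) := by
  obtain ⟨m, rfl⟩ : ∃ m, l = m + 1 := ⟨l - 1, by omega⟩
  classical
  set T : EuclideanSpace ℂ (Fin n) →L[ℂ] EuclideanSpace ℂ (Fin n) :=
    Matrix.toEuclideanCLM (𝕜 := ℂ) A with hT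
  have hQ : ∀ x : EuclideanSpace ℂ (Fin n), (inner ℂ x (T x) : ℂ).re ≤ μ * ‖x‖ ^ 2 := by
    intro x
    rcases eq_or_ne x 0 with rfl | hx
    · simp
    · have hxn : ‖x‖ ≠ 0 := norm_ne_zero_iff.mpr hx
      set c : ℝ := ‖x‖⁻¹ with hc
      have hcpos : 0 < c := by
        rw [hc]
        positivity
      have hu : ‖c • x‖ = 1 := by
        rw [norm_smul, Real.norm_eq_abs, abs_of_pos hcpos, hc, inv_mul_cancel₀ hxn]
      have hle := hμ.1 ⟨c • x, hu, rfl⟩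
      have hTE : Matrix.toEuclideanLin A (c • x) = T (c • x) := by
        rw [hT, ← Matrix.coe_toEuclideanCLM_eq_toEuclideanLin]
        rfl
      rw [hTE] at hle
      have hinner : (inner ℂ (c • x) (T (c • x)) : ℂ) = ((c * c : ℝ) : ℂ) * inner ℂ x (T x) := by
        have h1 : c • x = ((c : ℂ)) • x := (Complex.coe_smul c x).symm
        rw [h1, _root_.map_smul, inner_smul_left, inner_smul_right, Complex.conj_ofReal]
        push_cast
        ring
      rw [hinner, Complex.re_ofReal_mul] at hle
      have hone : c * c * ‖x‖ ^ 2 = 1 := by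
        rw [hc, pow_two]
        field_simp
      have h2 := mul_le_mul_of_nonneg_right hle (sq_nonneg ‖x‖)
      calc (inner ℂ x (T x) : ℂ).re = c * c * (inner ℂ x (T x) : ℂ).re * ‖x‖ ^ 2 := by
            rw [show c * c * (inner ℂ x (T x) : ℂ).re * ‖x‖ ^ 2
              = (inner ℂ x (T x) : ℂ).re * (c * c * ‖x‖ ^ 2) from by ring, hone, mul_one]
        _ ≤ μ * ‖x‖ ^ 2 := h2
  have hSum := phiAux_phi_hasSum T m
  have hSb : ‖∫ s in Set.Ioc (0:ℝ) 1, ((s ^ m / m.factorial : ℝ)) • exp ((1 - s) • T)‖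
      ≤ max 1 (Real.exp μ) / (m + 1).factorial := by
    have hInt : IntegrableOn
        (fun s : ℝ => (s ^ m / m.factorial) * max 1 (Real.exp μ)) (Set.Ioc (0:ℝ) 1) := by
      apply Continuous.integrableOn_Ioc
      fun_prop
    refine (MeasureTheory.norm_integral_le_of_norm_le hInt ?_).trans (le_of_eq ?_)
    · rw [ae_restrict_iff' measurableSet_Ioc]
      filter_upwards with s hs
      have hs0 : (0:ℝ) ≤ s := hs.1.le
      have h1 : (0:ℝ) ≤ 1 - s := by linarith [hs.2]
      have h2 := phiAux_exp_opNorm_le T μ hQ h1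
      have h3 : Real.exp ((1 - s) * μ) ≤ max 1 (Real.exp μ) := by
        rcases le_total μ 0 with hm0 | hm0
        · refine le_max_of_le_left ?_
          calc Real.exp ((1 - s) * μ) ≤ Real.exp 0 :=
                Real.exp_le_exp.mpr (by nlinarith)
            _ = 1 := Real.exp_zero
        · refine le_max_of_le_right ?_
          exact Real.exp_le_exp.mpr (by nlinarith)
      have hcoef : (0:ℝ) ≤ s ^ m / m.factorial :=
        div_nonneg (pow_nonneg hs0 m) (Nat.cast_nonneg _)
      rw [norm_smul (s ^ m / (m.factorial : ℝ)) (exp ((1 - s) • T)),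
        Real.norm_eq_abs, abs_of_nonneg hcoef]
      exact mul_le_mul_of_nonneg_left (h2.trans h3) hcoef
    · rw [integral_mul_const, ← intervalIntegral.integral_of_le zero_le_one,
        intervalIntegral.integral_div, integral_pow]
      have hm1 : ((m:ℝ) + 1) ≠ 0 := by positivity
      have hmf : (m.factorial : ℝ) ≠ 0 := Nat.cast_ne_zero.mpr m.factorial_ne_zero
      rw [Nat.factorial_succ]
      rw [one_pow, zero_pow (by omega), sub_zero]
      push_cast
      field_simp
  let ψ : (EuclideanSpace ℂ (Fin n) →L[ℂ] EuclideanSpace ℂ (Fin n)) →+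
      Matrix (Fin n) (Fin n) ℂ :=
    AddMonoidHom.mk' (fun B => (Matrix.toEuclideanCLM (𝕜 := ℂ)).symm B)
      (fun a b => map_add _ a b)
  have hψnorm : ∀ B, ‖ψ B‖ = ‖B‖ := by
    intro B
    show ‖(Matrix.toEuclideanCLM (𝕜 := ℂ)).symm B‖ = ‖B‖
    rw [Matrix.cstar_norm_def, StarAlgEquiv.apply_symm_apply]
  have hcont : Continuous ψ := (AddMonoidHomClass.isometry_of_norm ψ hψnorm).continuous
  have hmap := hSum.map ψ hcont
  have hfun : (⇑ψ ∘ fun k : ℕ => (((k + (m + 1)).factorial : ℝ))⁻¹ • T ^ k)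
      = fun k : ℕ => ((Nat.factorial (k + (m + 1)) : ℂ))⁻¹ • A ^ k := by
    funext k
    show (Matrix.toEuclideanCLM (𝕜 := ℂ)).symm ((((k + (m + 1)).factorial : ℝ))⁻¹ • T ^ k) = _
    have h1 : (((k + (m + 1)).factorial : ℂ))⁻¹
        = (((((k + (m + 1)).factorial : ℝ))⁻¹ : ℝ) : ℂ) := by
      rw [Complex.ofReal_inv, Complex.ofReal_natCast]
    have hcast : (((k + (m + 1)).factorial : ℂ))⁻¹ • T ^ k
        = (((k + (m + 1)).factorial : ℝ))⁻¹ • T ^ k := by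
      ext v
      simp only [ContinuousLinearMap.smul_apply]
      rw [h1, Complex.coe_smul]
    rw [← hcast, _root_.map_smul, map_pow, hT, StarAlgEquiv.symm_apply_apply]
  rw [hfun] at hmap
  have hphi : (∑' k : ℕ, ((Nat.factorial (k + (m + 1)) : ℂ))⁻¹ • A ^ k)
      = ψ (∫ s in Set.Ioc (0:ℝ) 1,
      ((s ^ m / m.factorial : ℝ)) • exp ((1 - s) • T)) := hmap.tsum_eq
  unfold phiM
  rw [hphi, hψnorm]
  exact hSb
end

section
/- Let N ≥ 1, t > 0, a > 0, c > 0, C > 0 and β ≥ 1. Let F ∈ ℂ^{N×N} satisfy ‖F^ℓ e_1‖ ≤ (1 + β^{−1} c ℓ) a^ℓ for 0 ≤ ℓ ≤ N−1, and ‖(tF)^N‖ ≤ (tC)^N. Let r_N(M) := Σ_{ℓ=N}^∞ M^ℓ/ℓ! be the N-th Taylor remainder of the matrix exponential. Then β ‖r_N(t F) e_1‖ ≤ (β + cN) e^{t a} Σ_{k=1}^∞ (tC)^{kN}/(kN)!. In particular, if a sequence of such matrices F_N satisfies these hypotheses with constants independent of N, then β ‖r_N(t F_N) e_1‖ → 0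 as N → ∞. -/
open scoped Matrix.Norms.L2Operator

/-- The first standard basis vector of `ℂ^N`. -/
noncomputable def e1C (N : ℕ) : Fin N → ℂ := fun j => if (j : ℕ) = 0 then 1 else 0

/-- The `N`-th Taylor remainder of the matrix exponential,
`r_N(M) = ∑_{ℓ=N}^∞ M^ℓ / ℓ!`, defined by its norm-convergent power series. -/
noncomputable def rM {d : ℕ} (N : ℕ) (M : Matrix (Fin d) (Fin d) ℂ) :
    Matrix (Fin d) (Fin d) ℂ :=
  ∑' k : ℕ, ((Nat.factorial (N + k) : ℂ))⁻¹ • M ^ (N + k)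

/-- The Euclidean norm of a vector in `ℂ^n`. -/
noncomputable def cnorm {n : ℕ} (v : Fin n → ℂ) : ℝ :=
  ‖(WithLp.equiv 2 (Fin n → ℂ)).symm v‖

lemma cnorm_nonneg {n : ℕ} (v : Fin n → ℂ) : 0 ≤ cnorm v := norm_nonneg _

lemma cnorm_smul {n : ℕ} (s : ℂ) (v : Fin n → ℂ) : cnorm (s • v) = ‖s‖ * cnorm v := by
  unfold cnorm
  rw [show (WithLp.equiv 2 (Fin n → ℂ)).symm (s • v) = s • (WithLp.equiv 2 (Fin n → ℂ)).symm v from rfl, norm_smul]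

lemma cnorm_mulVec_le {n : ℕ} (A : Matrix (Fin n) (Fin n) ℂ) (v : Fin n → ℂ) :
    cnorm (A.mulVec v) ≤ ‖A‖ * cnorm v :=
  A.l2_opNorm_mulVec ((WithLp.equiv 2 (Fin n → ℂ)).symm v)

lemma summable_rM {d : ℕ} (N : ℕ) (hN : 1 ≤ N) (M : Matrix (Fin d) (Fin d) ℂ) :
    Summable (fun k : ℕ => ((Nat.factorial (N + k) : ℂ))⁻¹ • M ^ (N + k)) := by
  apply Summable.of_norm_bounded (g := fun k => ‖M‖ ^ (N + k) / (Nat.factorial (N + k)))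
  · exact (Real.summable_pow_div_factorial ‖M‖).comp_injective (add_right_injective N)
  · intro k
    rw [norm_smul, norm_inv, Complex.norm_natCast]
    rw [div_eq_inv_mul]
    gcongr
    exact norm_pow_le' M (by omega)

/-- Multiplication of a matrix against a fixed vector, as a continuous linear map into
Euclidean space. -/
noncomputable def mulVecCLM {d : ℕ} (v : Fin d → ℂ) :
    Matrix (Fin d) (Fin d) ℂ →L[ℂ] EuclideanSpace ℂ (Fin d) :=
  LinearMap.toContinuousLinearMap
    { toFun := fun A => (WithLp.equiv 2 (Fin d → ℂ)).symm (A.mulVec v)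
      map_add' := fun A B => by
        simp only [Matrix.add_mulVec]; rfl
      map_smul' := fun s A => by
        simp only [Matrix.smul_mulVec, RingHom.id_apply]; rfl }

lemma cnorm_rM_le_tsum {d : ℕ} (N : ℕ) (hN : 1 ≤ N) (M : Matrix (Fin d) (Fin d) ℂ)
    (v : Fin d → ℂ) (D : ℕ → ℝ) (hD : Summable D)
    (hDle : ∀ k, cnorm (((((N + k).factorial : ℂ))⁻¹ • M ^ (N + k)).mulVec v) ≤ D k) :
    cnorm ((rM N M).mulVec v) ≤ ∑' k, D k := by
  have h1 : (WithLp.equiv 2 (Fin d → ℂ)).symm ((rM N M).mulVec v)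
      = ∑' k : ℕ, mulVecCLM v ((((N + k).factorial : ℂ))⁻¹ • M ^ (N + k)) := by
    rw [← (mulVecCLM v).map_tsum (summable_rM N hN M)]
    rfl
  show ‖(WithLp.equiv 2 (Fin d → ℂ)).symm ((rM N M).mulVec v)‖ ≤ _
  rw [h1]
  exact tsum_of_norm_bounded hD.hasSum (fun k => hDle k)

lemma term_bound (t a c C β : ℝ)
    (ht : 0 < t) (ha : 0 < a) (hc : 0 < c) (hC : 0 < C) (hβ : 1 ≤ β)
    (N : ℕ) (hN : 1 ≤ N) (F : Matrix (Fin N) (Fin N) ℂ)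
    (hF1 : ∀ l : ℕ, l ≤ N - 1 →
      cnorm ((F ^ l).mulVec (e1C N)) ≤ (1 + β⁻¹ * c * l) * a ^ l)
    (hF2 : ‖((t : ℂ) • F) ^ N‖ ≤ (t * C) ^ N) (k : ℕ) :
    cnorm (((((N + k).factorial : ℂ))⁻¹ • ((t : ℂ) • F) ^ (N + k)).mulVec (e1C N)) ≤
      (1 + β⁻¹ * c * N) *
        ((((k / N + 1) * N).factorial : ℝ)⁻¹ * ((t * C) ^ N) ^ (k / N + 1)) *
        (((k % N).factorial : ℝ)⁻¹ * (t * a) ^ (k % N)) := by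
  set q := k / N with hq
  set r := k % N with hrdef
  have hβ0 : (0:ℝ) < β := lt_of_lt_of_le one_pos hβ
  have hβinv : (0:ℝ) ≤ β⁻¹ := inv_nonneg.2 hβ0.le
  have hr : r < N := Nat.mod_lt _ (by omega)
  have hk : N + k = (q + 1) * N + r := by
    have h2 := Nat.div_add_mod k N
    rw [← h2]; ring
  -- rewrite the matrix power
  have hpow : ((t : ℂ) • F) ^ (N + k)
      = (((t : ℂ) • F) ^ N) ^ (q + 1) * ((t : ℂ) • F) ^ r := by
    rw [hk, pow_add, pow_mul']
  rw [Matrix.smul_mulVec, cnorm_smul, hpow, ← Matrix.mulVec_mulVec]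
  have h1 : ‖(((N + k).factorial : ℂ))⁻¹‖ = (((N + k).factorial : ℝ))⁻¹ := by
    rw [norm_inv]; norm_cast
  -- norm of inner vector
  have hw : cnorm ((((t : ℂ) • F) ^ r).mulVec (e1C N))
      ≤ t ^ r * ((1 + β⁻¹ * c * r) * a ^ r) := by
    rw [smul_pow, Matrix.smul_mulVec, cnorm_smul, norm_pow, Complex.norm_real,
      Real.norm_of_nonneg ht.le]
    exact mul_le_mul_of_nonneg_left (hF1 r (by omega)) (by positivity)
  have hA : ‖(((t : ℂ) • F) ^ N) ^ (q + 1)‖ ≤ ((t * C) ^ N) ^ (q + 1) :=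
    le_trans (norm_pow_le' _ (Nat.succ_pos q)) (pow_le_pow_left₀ (norm_nonneg _) hF2 _)
  have hmain : cnorm (((((t : ℂ) • F) ^ N) ^ (q + 1)).mulVec
        (((((t : ℂ) • F)) ^ r).mulVec (e1C N)))
      ≤ ((t * C) ^ N) ^ (q + 1) * (t ^ r * ((1 + β⁻¹ * c * r) * a ^ r)) := by
    refine le_trans (cnorm_mulVec_le _ _) ?_
    exact mul_le_mul hA hw (cnorm_nonneg _) (by positivity)
  rw [h1]
  calc (((N + k).factorial : ℝ))⁻¹ * cnorm _
      ≤ (((N + k).factorial : ℝ))⁻¹ *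
          (((t * C) ^ N) ^ (q + 1) * (t ^ r * ((1 + β⁻¹ * c * r) * a ^ r))) := by
        exact mul_le_mul_of_nonneg_left hmain (by positivity)
    _ ≤ ((((q + 1) * N).factorial : ℝ))⁻¹ * ((r.factorial : ℝ))⁻¹ *
          (((t * C) ^ N) ^ (q + 1) * (t ^ r * ((1 + β⁻¹ * c * N) * a ^ r))) := by
        refine mul_le_mul ?_ ?_ (by positivity) (by positivity)
        · rw [← mul_inv]
          apply inv_anti₀ (by positivity)
          have hd := Nat.factorial_mul_factorial_dvd_factorial_add ((q + 1) * N) r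
          rw [← hk] at hd
          exact_mod_cast Nat.le_of_dvd (N + k).factorial_pos hd
        · have hrN : (r:ℝ) ≤ N := by exact_mod_cast hr.le
          gcongr
    _ = (1 + β⁻¹ * c * N) *
          ((((q + 1) * N).factorial : ℝ)⁻¹ * ((t * C) ^ N) ^ (q + 1)) *
          ((r.factorial : ℝ)⁻¹ * (t * a) ^ r) := by
        rw [mul_pow t a r]; ring

lemma tsum_divmod (N : ℕ) (hN : 1 ≤ N) (u v : ℕ → ℝ)
    (hu : Summable u) (hu0 : ∀ k, 0 ≤ u k) (hv0 : ∀ k, 0 ≤ v k) :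
    (Summable fun k : ℕ => u (k / N) * v (k % N)) ∧
    ∑' k : ℕ, u (k / N) * v (k % N) = (∑' k, u k) * ∑ j ∈ Finset.range N, v j := by
  haveI : NeZero N := ⟨by omega⟩
  set g : ℕ × Fin N → ℝ := fun p => u p.1 * v (p.2 : ℕ) with hgdef
  have hvfin : Summable (fun j : Fin N => v (j : ℕ)) := Summable.of_finite
  have hg : Summable g :=
    hu.mul_of_nonneg hvfin (fun k => hu0 k) (fun j => hv0 _)
  have h1 : ∀ k : ℕ, u (k / N) * v (k % N) = g (Nat.divModEquiv N k) := by
    intro k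
    simp [hgdef, Nat.divModEquiv, Fin.val_natCast]
  have hs : Summable fun k : ℕ => u (k / N) * v (k % N) := by
    have := (Nat.divModEquiv N).summable_iff.2 hg
    exact this.congr (fun k => (h1 k).symm)
  refine ⟨hs, ?_⟩
  calc ∑' k : ℕ, u (k / N) * v (k % N)
      = ∑' k : ℕ, g (Nat.divModEquiv N k) := by exact tsum_congr h1
    _ = ∑' p : ℕ × Fin N, g p := (Nat.divModEquiv N).tsum_eq g
    _ = ∑' x : ℕ, ∑' y : Fin N, u x * v (y : ℕ) :=
        Summable.tsum_prod' hg (fun b => Summable.of_finite)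
    _ = ∑' x : ℕ, u x * ∑ j : Fin N, v (j : ℕ) := by
        refine tsum_congr fun x => ?_
        rw [tsum_fintype, ← Finset.mul_sum]
    _ = (∑' k, u k) * ∑ j : Fin N, v (j : ℕ) := tsum_mul_right
    _ = (∑' k, u k) * ∑ j ∈ Finset.range N, v j := by
        rw [Fin.sum_univ_eq_sum_range]

lemma exp_tsum (x : ℝ) : Real.exp x = ∑' n : ℕ, x ^ n / (n.factorial : ℝ) := by
  rw [Real.exp_eq_exp_ℝ, NormedSpace.exp_eq_tsum_div]

lemma summable_u (x : ℝ) (N : ℕ) (hN : 1 ≤ N) :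
    Summable (fun k : ℕ => x ^ ((k + 1) * N) / (((k + 1) * N).factorial : ℝ)) := by
  have hinj : Function.Injective (fun k : ℕ => (k + 1) * N) := by
    intro a b hab
    have : a + 1 = b + 1 := Nat.eq_of_mul_eq_mul_right (by omega) hab
    omega
  exact (Real.summable_pow_div_factorial x).comp_injective hinj

lemma summable_u' (x : ℝ) (N : ℕ) (hN : 1 ≤ N) :
    Summable (fun k : ℕ => x ^ (k * N) / ((k * N).factorial : ℝ)) := by
  have hinj : Function.Injective (fun k : ℕ => k * N) := by
    intro a b hab
    exact Nat.eq_of_mul_eq_mul_right (by omega) hab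
  exact (Real.summable_pow_div_factorial x).comp_injective hinj

lemma key_bound (t a c C β : ℝ)
    (ht : 0 < t) (ha : 0 < a) (hc : 0 < c) (hC : 0 < C) (hβ : 1 ≤ β)
    (N : ℕ) (hN : 1 ≤ N) (F : Matrix (Fin N) (Fin N) ℂ)
    (hF1 : ∀ l : ℕ, l ≤ N - 1 →
      cnorm ((F ^ l).mulVec (e1C N)) ≤ (1 + β⁻¹ * c * l) * a ^ l)
    (hF2 : ‖((t : ℂ) • F) ^ N‖ ≤ (t * C) ^ N) :
    β * cnorm ((rM N ((t : ℂ) • F)).mulVec (e1C N)) ≤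
      (β + c * N) * Real.exp (t * a) *
        ∑' k : ℕ, (t * C) ^ ((k + 1) * N) / (Nat.factorial ((k + 1) * N)) := by
  have hβ0 : (0:ℝ) < β := lt_of_lt_of_le one_pos hβ
  set u : ℕ → ℝ := fun k => (t * C) ^ ((k + 1) * N) / (((k + 1) * N).factorial : ℝ) with hu_def
  set v : ℕ → ℝ := fun j => ((j.factorial : ℝ))⁻¹ * (t * a) ^ j with hv_def
  have hu : Summable u := summable_u (t * C) N hN
  have hu0 : ∀ k, 0 ≤ u k := fun k => by positivity
  have hv0 : ∀ k, 0 ≤ v k := fun k => by positivity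
  have huv : ∀ k' : ℕ, (((k' + 1) * N).factorial : ℝ)⁻¹ * ((t * C) ^ N) ^ (k' + 1) = u k' := by
    intro k'
    rw [hu_def]
    simp only
    rw [← pow_mul', div_eq_inv_mul]
  obtain ⟨hDsum, hDeq⟩ := tsum_divmod N hN u v hu hu0 hv0
  set D : ℕ → ℝ := fun k => (1 + β⁻¹ * c * N) * (u (k / N) * v (k % N)) with hD_def
  have hDsum' : Summable D := hDsum.mul_left _
  have h1 : cnorm ((rM N ((t : ℂ) • F)).mulVec (e1C N)) ≤ ∑' k, D k := by
    refine cnorm_rM_le_tsum N hN _ _ D hDsum' (fun k => ?_)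
    refine le_trans (term_bound t a c C β ht ha hc hC hβ N hN F hF1 hF2 k) ?_
    rw [hD_def]
    simp only
    rw [huv (k / N), mul_assoc]
  have h2 : ∑' k, D k = (1 + β⁻¹ * c * N) * ((∑' k, u k) * ∑ j ∈ Finset.range N, v j) := by
    rw [hD_def, tsum_mul_left, hDeq]
  have h3 : ∑ j ∈ Finset.range N, v j ≤ Real.exp (t * a) := by
    refine le_trans (le_of_eq ?_) (Real.sum_le_exp_of_nonneg (by positivity) N)
    exact Finset.sum_congr rfl fun j _ => by rw [hv_def]; simp only; rw [div_eq_inv_mul]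
  have hU0 : 0 ≤ ∑' k, u k := tsum_nonneg hu0
  calc β * cnorm ((rM N ((t : ℂ) • F)).mulVec (e1C N))
      ≤ β * ∑' k, D k := by gcongr
    _ = (β + c * N) * ((∑' k, u k) * ∑ j ∈ Finset.range N, v j) := by
        rw [h2, ← mul_assoc]
        congr 1
        field_simp
    _ ≤ (β + c * N) * ((∑' k, u k) * Real.exp (t * a)) := by
        have hβc : (0:ℝ) ≤ β + c * N := by positivity
        gcongr
    _ = (β + c * N) * Real.exp (t * a) * ∑' k, u k := by ring

lemma tail_bound (x : ℝ) (hx : 0 < x) (N : ℕ) (hN : 1 ≤ N) :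
    ∑' k : ℕ, x ^ ((k + 1) * N) / (((k + 1) * N).factorial : ℝ)
      ≤ x ^ N / (N.factorial : ℝ) * Real.exp x := by
  have hstep : ∀ k : ℕ, x ^ ((k + 1) * N) / (((k + 1) * N).factorial : ℝ)
      ≤ x ^ N / (N.factorial : ℝ) * (x ^ (k * N) / ((k * N).factorial : ℝ)) := by
    intro k
    have hkN : (k + 1) * N = N + k * N := by ring
    have hfac : (N.factorial * (k * N).factorial : ℝ) ≤ (((k + 1) * N).factorial : ℝ) := by
      rw [hkN]
      exact_mod_cast Nat.le_of_dvd (Nat.factorial_pos _)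
        (Nat.factorial_mul_factorial_dvd_factorial_add N (k * N))
    calc x ^ ((k + 1) * N) / (((k + 1) * N).factorial : ℝ)
        ≤ x ^ ((k + 1) * N) / ((N.factorial * (k * N).factorial : ℝ)) := by
          apply div_le_div_of_nonneg_left (by positivity) (by positivity) hfac
      _ = x ^ N / (N.factorial : ℝ) * (x ^ (k * N) / ((k * N).factorial : ℝ)) := by
          rw [hkN, pow_add]
          field_simp
  refine le_trans (Summable.tsum_le_tsum hstep (summable_u x N hN)
    ((summable_u' x N hN).mul_left _)) ?_
  rw [tsum_mul_left]
  gcongr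
  rw [exp_tsum x]
  refine Summable.tsum_le_tsum_of_inj (fun k => k * N)
    (fun a b hab => Nat.eq_of_mul_eq_mul_right (by omega) hab)
    (fun m _ => by positivity) (fun k => le_rfl) (summable_u' x N hN)
    (Real.summable_pow_div_factorial x)

open Filter in
lemma tendsto_G (t a c C β : ℝ) :
    Tendsto (fun M : ℕ => (β + c * M) * Real.exp (t * a) *
      (((t * C) ^ M / (M.factorial : ℝ)) * Real.exp (t * C))) atTop (nhds 0) := by
  set x := t * C with hx
  have hbase : Tendsto (fun n : ℕ => x ^ n / (n.factorial : ℝ)) atTop (nhds 0) :=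
    (Real.summable_pow_div_factorial x).tendsto_atTop_zero
  have T1 : Tendsto (fun M : ℕ => β * (x ^ M / (M.factorial : ℝ))) atTop (nhds 0) := by
    simpa using hbase.const_mul β
  have h2 : Tendsto (fun n : ℕ => x * (x ^ n / (n.factorial : ℝ))) atTop (nhds 0) := by
    simpa using hbase.const_mul x
  have h3 : Tendsto (fun M : ℕ => x * (x ^ (M - 1) / ((M - 1).factorial : ℝ)))
      atTop (nhds 0) := h2.comp (tendsto_sub_atTop_nat 1)
  have T2 : Tendsto (fun M : ℕ => (M : ℝ) * (x ^ M / (M.factorial : ℝ))) atTop (nhds 0) := by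
    refine h3.congr' ?_
    filter_upwards [eventually_ge_atTop 1] with M hM
    obtain ⟨m, rfl⟩ : ∃ m, M = m + 1 := ⟨M - 1, by omega⟩
    simp only [Nat.add_sub_cancel, Nat.factorial_succ]
    have hm : (m.factorial : ℝ) ≠ 0 := by positivity
    push_cast
    field_simp
    ring
  have Tsum : Tendsto (fun M : ℕ => β * (x ^ M / (M.factorial : ℝ))
      + c * ((M : ℝ) * (x ^ M / (M.factorial : ℝ)))) atTop (nhds 0) := by
    simpa using T1.add (T2.const_mul c)
  have := Tsum.mul_const (Real.exp (t * a) * Real.exp (t * C))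
  rw [zero_mul] at this
  refine this.congr (fun M => ?_)
  rw [hx]; ring

/-- If `‖F^ℓ e₁‖ ≤ (1 + β⁻¹ c ℓ) a^ℓ` for `0 ≤ ℓ ≤ N-1` and `‖(tF)^N‖ ≤ (tC)^N`, then
`β ‖r_N(t F) e₁‖ ≤ (β + c N) e^{t a} ∑_{k=1}^∞ (tC)^{kN}/(kN)!`; in particular, for a
sequence of such matrices `F_N` with constants independent of `N`,
`β ‖r_N(t F_N) e₁‖ → 0` as `N → ∞`. -/
theorem arnoldi_remainder_bound (t a c C β : ℝ)
    (ht : 0 < t) (ha : 0 < a) (hc : 0 < c) (hC : 0 < C) (hβ : 1 ≤ β)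
    (N : ℕ) (hN : 1 ≤ N) (F : Matrix (Fin N) (Fin N) ℂ)
    (hF1 : ∀ l : ℕ, l ≤ N - 1 →
      cnorm ((F ^ l).mulVec (e1C N)) ≤ (1 + β⁻¹ * c * l) * a ^ l)
    (hF2 : ‖((t : ℂ) • F) ^ N‖ ≤ (t * C) ^ N) :
    (β * cnorm ((rM N ((t : ℂ) • F)).mulVec (e1C N)) ≤
      (β + c * N) * Real.exp (t * a) *
        ∑' k : ℕ, (t * C) ^ ((k + 1) * N) / (Nat.factorial ((k + 1) * N))) ∧
    (∀ Fs : (M : ℕ) → Matrix (Fin M) (Fin M) ℂ,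
      (∀ M : ℕ, 1 ≤ M →
        (∀ l : ℕ, l ≤ M - 1 →
          cnorm (((Fs M) ^ l).mulVec (e1C M)) ≤ (1 + β⁻¹ * c * l) * a ^ l) ∧
        ‖((t : ℂ) • Fs M) ^ M‖ ≤ (t * C) ^ M) →
      Filter.Tendsto (fun M : ℕ => β * cnorm ((rM M ((t : ℂ) • Fs M)).mulVec (e1C M)))
        Filter.atTop (nhds 0)) := by
  have hβ0 : (0:ℝ) < β := lt_of_lt_of_le one_pos hβ
  constructor
  · exact key_bound t a c C β ht ha hc hC hβ N hN F hF1 hF2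
  · intro Fs hFs
    have htC : 0 < t * C := mul_pos ht hC
    refine tendsto_of_tendsto_of_tendsto_of_le_of_le'
      tendsto_const_nhds (tendsto_G t a c C β) ?_ ?_
    · exact Filter.Eventually.of_forall fun M =>
        mul_nonneg hβ0.le (cnorm_nonneg _)
    · filter_upwards [Filter.eventually_ge_atTop 1] with M hM
      obtain ⟨h1, h2⟩ := hFs M hM
      calc β * cnorm ((rM M ((t : ℂ) • Fs M)).mulVec (e1C M))
          ≤ (β + c * M) * Real.exp (t * a) *
            ∑' k : ℕ, (t * C) ^ ((k + 1) * M) / (Nat.factorial ((k + 1) * M)) :=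
          key_bound t a c C β ht ha hc hC hβ M hM (Fs M) h1 h2
        _ ≤ (β + c * M) * Real.exp (t * a) *
            (((t * C) ^ M / (M.factorial : ℝ)) * Real.exp (t * C)) := by
            have hβc : (0:ℝ) ≤ (β + c * M) * Real.exp (t * a) := by positivity
            exact mul_le_mul_of_nonneg_left (tail_bound (t * C) htC M hM) hβc
end
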